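/- Let C have a terminal object 1 and let tp : Tm ⟶ Ty be a universe in C equipped with an elementary Unit-type structure. Then the commutative square with top map unit_1 : 1 ⟶ Tm, left map id_1 : 1 ⟶ 1, right map tp : Tm ⟶ Ty, and bottom map Unit_1 : 1 ⟶ Ty is a pullback square; that is, tp admits an algebraic Unit-type structure. -/
import Mathlib


namespace Paper

open CategoryTheory Limits

universe v u

variable {C : Type u} [Category.{v} C]

/-- A universe in a category `C`: a morphism `tp : Tm ⟶ Ty` together with chosen
pullbacks (context extensions) along every `A : Γ ⟶ Ty`. -/
structure Univ (C : Type u) [Category.{v} C] where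
  Tm : C
  Ty : C
  tp : Tm ⟶ Ty
  ext : ∀ {Γ : C}, (Γ ⟶ Ty) → C
  disp : ∀ {Γ : C} (A : Γ ⟶ Ty), ext A ⟶ Γ
  var : ∀ {Γ : C} (A : Γ ⟶ Ty), ext A ⟶ Tm
  isPullback : ∀ {Γ : C} (A : Γ ⟶ Ty), IsPullback (var A) (disp A) tp A

/-- The induced map `σ.a : Δ ⟶ Γ.A` into the chosen pullback. -/
noncomputable def Univ.substCons (U : Univ C) {Δ Γ : C} (σ : Δ ⟶ Γ) (A : Γ ⟶ U.Ty)
    (a : Δ ⟶ U.Tm) (h : a ≫ U.tp = σ ≫ A) : Δ ⟶ U.ext A :=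
  (U.isPullback A).lift a σ h

@[simp] lemma Univ.substCons_var (U : Univ C) {Δ Γ : C} (σ : Δ ⟶ Γ) (A : Γ ⟶ U.Ty)
    (a : Δ ⟶ U.Tm) (h : a ≫ U.tp = σ ≫ A) : U.substCons σ A a h ≫ U.var A = a :=
  (U.isPullback A).lift_fst a σ h

@[simp] lemma Univ.substCons_disp (U : Univ C) {Δ Γ : C} (σ : Δ ⟶ Γ) (A : Γ ⟶ U.Ty)
    (a : Δ ⟶ U.Tm) (h : a ≫ U.tp = σ ≫ A) : U.substCons σ A a h ≫ U.disp A = σ :=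
  (U.isPullback A).lift_snd a σ h

/-- The weakening `σ̃ := (d_{σ≫A} ≫ σ).var_{σ≫A} : Δ.(σ ≫ A) ⟶ Γ.A`. -/
noncomputable def Univ.wk (U : Univ C) {Δ Γ : C} (σ : Δ ⟶ Γ) (A : Γ ⟶ U.Ty) :
    U.ext (σ ≫ A) ⟶ U.ext A :=
  U.substCons (U.disp (σ ≫ A) ≫ σ) A (U.var (σ ≫ A))
    (by rw [(U.isPullback (σ ≫ A)).w, Category.assoc])

/-- The section `id_Γ.a : Γ ⟶ Γ.A` of a term `a` of type `A`. -/
noncomputable def Univ.sec (U : Univ C) {Γ : C} (A : Γ ⟶ U.Ty) (a : Γ ⟶ U.Tm)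
    (ha : a ≫ U.tp = A) : Γ ⟶ U.ext A :=
  U.substCons (𝟙 Γ) A a (by rw [ha, Category.id_comp])

@[simp] lemma Univ.sec_var (U : Univ C) {Γ : C} (A : Γ ⟶ U.Ty) (a : Γ ⟶ U.Tm)
    (ha : a ≫ U.tp = A) : U.sec A a ha ≫ U.var A = a :=
  U.substCons_var _ _ _ _

@[simp] lemma Univ.sec_disp (U : Univ C) {Γ : C} (A : Γ ⟶ U.Ty) (a : Γ ⟶ U.Tm)
    (ha : a ≫ U.tp = A) : U.sec A a ha ≫ U.disp A = 𝟙 Γ :=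
  U.substCons_disp _ _ _ _

/-- An elementary `Unit`-type structure on a universe. -/
structure ElemUnit (U : Univ C) where
  unitTy : ∀ (Γ : C), Γ ⟶ U.Ty
  unitTy_stable : ∀ {Δ Γ : C} (σ : Δ ⟶ Γ), σ ≫ unitTy Γ = unitTy Δ
  unitTm : ∀ (Γ : C), Γ ⟶ U.Tm
  unitTm_tp : ∀ (Γ : C), unitTm Γ ≫ U.tp = unitTy Γ
  unitTm_unique : ∀ {Γ : C} (u : Γ ⟶ U.Tm), u ≫ U.tp = unitTy Γ → u = unitTm Γ

/-- An elementary `Π`-type structure on a universe (unlam-stability is not assumed). -/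
structure ElemPi (U : Univ C) where
  Pi : ∀ {Γ : C} (A : Γ ⟶ U.Ty), (U.ext A ⟶ U.Ty) → (Γ ⟶ U.Ty)
  Pi_stable : ∀ {Δ Γ : C} (σ : Δ ⟶ Γ) (A : Γ ⟶ U.Ty) (B : U.ext A ⟶ U.Ty),
    Pi (σ ≫ A) (U.wk σ A ≫ B) = σ ≫ Pi A B
  lam : ∀ {Γ : C} (A : Γ ⟶ U.Ty), (U.ext A ⟶ U.Tm) → (Γ ⟶ U.Tm)
  lam_tp : ∀ {Γ : C} (A : Γ ⟶ U.Ty) (b : U.ext A ⟶ U.Tm),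
    lam A b ≫ U.tp = Pi A (b ≫ U.tp)
  lam_stable : ∀ {Δ Γ : C} (σ : Δ ⟶ Γ) (A : Γ ⟶ U.Ty) (b : U.ext A ⟶ U.Tm),
    lam (σ ≫ A) (U.wk σ A ≫ b) = σ ≫ lam A b
  unlam : ∀ {Γ : C} (A : Γ ⟶ U.Ty) (B : U.ext A ⟶ U.Ty) (f : Γ ⟶ U.Tm),
    f ≫ U.tp = Pi A B → (U.ext A ⟶ U.Tm)
  unlam_tp : ∀ {Γ : C} (A : Γ ⟶ U.Ty) (B : U.ext A ⟶ U.Ty) (f : Γ ⟶ U.Tm)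
    (hf : f ≫ U.tp = Pi A B), unlam A B f hf ≫ U.tp = B
  unlam_lam : ∀ {Γ : C} (A : Γ ⟶ U.Ty) (b : U.ext A ⟶ U.Tm)
    (h : lam A b ≫ U.tp = Pi A (b ≫ U.tp)), unlam A (b ≫ U.tp) (lam A b) h = b
  lam_unlam : ∀ {Γ : C} (A : Γ ⟶ U.Ty) (B : U.ext A ⟶ U.Ty) (f : Γ ⟶ U.Tm)
    (hf : f ≫ U.tp = Pi A B), lam A (unlam A B f hf) = f

/-- An elementary `Σ`-type structure on a universe (fst/snd-stability is not assumed). -/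
structure ElemSigma (U : Univ C) where
  Sig : ∀ {Γ : C} (A : Γ ⟶ U.Ty), (U.ext A ⟶ U.Ty) → (Γ ⟶ U.Ty)
  Sig_stable : ∀ {Δ Γ : C} (σ : Δ ⟶ Γ) (A : Γ ⟶ U.Ty) (B : U.ext A ⟶ U.Ty),
    Sig (σ ≫ A) (U.wk σ A ≫ B) = σ ≫ Sig A B
  pair : ∀ {Γ : C} (A : Γ ⟶ U.Ty) (B : U.ext A ⟶ U.Ty) (a b : Γ ⟶ U.Tm)
    (ha : a ≫ U.tp = A), b ≫ U.tp = U.sec A a ha ≫ B → (Γ ⟶ U.Tm)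
  pair_tp : ∀ {Γ : C} (A : Γ ⟶ U.Ty) (B : U.ext A ⟶ U.Ty) (a b : Γ ⟶ U.Tm)
    (ha : a ≫ U.tp = A) (hb : b ≫ U.tp = U.sec A a ha ≫ B),
    pair A B a b ha hb ≫ U.tp = Sig A B
  pair_stable : ∀ {Δ Γ : C} (σ : Δ ⟶ Γ) (A : Γ ⟶ U.Ty) (B : U.ext A ⟶ U.Ty)
    (a b : Γ ⟶ U.Tm) (ha : a ≫ U.tp = A) (hb : b ≫ U.tp = U.sec A a ha ≫ B)
    (ha' : (σ ≫ a) ≫ U.tp = σ ≫ A)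
    (hb' : (σ ≫ b) ≫ U.tp = U.sec (σ ≫ A) (σ ≫ a) ha' ≫ (U.wk σ A ≫ B)),
    pair (σ ≫ A) (U.wk σ A ≫ B) (σ ≫ a) (σ ≫ b) ha' hb' = σ ≫ pair A B a b ha hb
  fst : ∀ {Γ : C} (A : Γ ⟶ U.Ty) (B : U.ext A ⟶ U.Ty) (s : Γ ⟶ U.Tm),
    s ≫ U.tp = Sig A B → (Γ ⟶ U.Tm)
  snd : ∀ {Γ : C} (A : Γ ⟶ U.Ty) (B : U.ext A ⟶ U.Ty) (s : Γ ⟶ U.Tm),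
    s ≫ U.tp = Sig A B → (Γ ⟶ U.Tm)
  fst_tp : ∀ {Γ : C} (A : Γ ⟶ U.Ty) (B : U.ext A ⟶ U.Ty) (s : Γ ⟶ U.Tm)
    (hs : s ≫ U.tp = Sig A B), fst A B s hs ≫ U.tp = A
  snd_tp : ∀ {Γ : C} (A : Γ ⟶ U.Ty) (B : U.ext A ⟶ U.Ty) (s : Γ ⟶ U.Tm)
    (hs : s ≫ U.tp = Sig A B),
    snd A B s hs ≫ U.tp = U.sec A (fst A B s hs) (fst_tp A B s hs) ≫ B
  fst_pair : ∀ {Γ : C} (A : Γ ⟶ U.Ty) (B : U.ext A ⟶ U.Ty) (a b : Γ ⟶ U.Tm)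
    (ha : a ≫ U.tp = A) (hb : b ≫ U.tp = U.sec A a ha ≫ B)
    (h : pair A B a b ha hb ≫ U.tp = Sig A B), fst A B (pair A B a b ha hb) h = a
  snd_pair : ∀ {Γ : C} (A : Γ ⟶ U.Ty) (B : U.ext A ⟶ U.Ty) (a b : Γ ⟶ U.Tm)
    (ha : a ≫ U.tp = A) (hb : b ≫ U.tp = U.sec A a ha ≫ B)
    (h : pair A B a b ha hb ≫ U.tp = Sig A B), snd A B (pair A B a b ha hb) h = b
  pair_fst_snd : ∀ {Γ : C} (A : Γ ⟶ U.Ty) (B : U.ext A ⟶ U.Ty) (s : Γ ⟶ U.Tm)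
    (hs : s ≫ U.tp = Sig A B) (h1 : fst A B s hs ≫ U.tp = A)
    (h2 : snd A B s hs ≫ U.tp = U.sec A (fst A B s hs) h1 ≫ B),
    pair A B (fst A B s hs) (snd A B s hs) h1 h2 = s

/-- A weak pullback structure on a commutative square. -/
structure WeakPullbackStr {P X Y Z : C} (g' : P ⟶ X) (f' : P ⟶ Y) (f : X ⟶ Z) (g : Y ⟶ Z) where
  lift : ∀ {W : C} (x : W ⟶ X) (y : W ⟶ Y), x ≫ f = y ≫ g → (W ⟶ P)
  lift_fst : ∀ {W : C} (x : W ⟶ X) (y : W ⟶ Y) (h : x ≫ f = y ≫ g), lift x y h ≫ g' = x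
  lift_snd : ∀ {W : C} (x : W ⟶ X) (y : W ⟶ Y) (h : x ≫ f = y ≫ g), lift x y h ≫ f' = y

/-- Coherence of a weak pullback structure: the chosen lifts commute with all cone morphisms. -/
def WeakPullbackStr.Coherent {P X Y Z : C} {g' : P ⟶ X} {f' : P ⟶ Y} {f : X ⟶ Z} {g : Y ⟶ Z}
    (w : WeakPullbackStr g' f' f g) : Prop :=
  ∀ {V W : C} (σ : V ⟶ W) (x : W ⟶ X) (y : W ⟶ Y) (h : x ≫ f = y ≫ g)
    (h' : (σ ≫ x) ≫ f = (σ ≫ y) ≫ g),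
    σ ≫ w.lift x y h = w.lift (σ ≫ x) (σ ≫ y) h'

end Paper

open CategoryTheory Limits Paper in
/-- for a universe with an elementary `Unit`-type structure in a
category with a terminal object, the square `(unit_1, id_1, tp, Unit_1)` is a
pullback; i.e. `tp` admits an algebraic `Unit`-type structure. -/
theorem elemUnit_to_algebraic {C : Type*} [Category C] [HasTerminal C]
    (U : Univ C) (E : ElemUnit U) :
    IsPullback (E.unitTm (⊤_ C)) (𝟙 (⊤_ C)) U.tp (E.unitTy (⊤_ C)) := by
  refine IsPullback.of_isLimit' ⟨by simp [E.unitTm_tp]⟩ ?_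
  refine PullbackCone.IsLimit.mk _ (fun s => terminal.from _) ?_ ?_ ?_
  · intro s
    have h1 : (terminal.from s.pt ≫ E.unitTm (⊤_ C)) ≫ U.tp = E.unitTy s.pt := by
      rw [Category.assoc, E.unitTm_tp, E.unitTy_stable]
    have h2 : s.fst ≫ U.tp = E.unitTy s.pt := by
      rw [s.condition]; exact E.unitTy_stable _
    rw [E.unitTm_unique _ h1, E.unitTm_unique _ h2]
  · intro s; exact Subsingleton.elim _ _
  · intro s m _ _; exact Subsingleton.elim _ _
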